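/- arXiv:2308.08735 — 5 statements merged into one kernel-verified Lean document; each statement's English description precedes it below -/
import Mathlib

section
/- Let f : ℝⁿ → ℝ ∪ {∞} be proper, lower semicontinuous, and prox-bounded with threshold λ_f, and let λ ∈ (0, λ_f). If x̄ ∈ dom f and 0 belongs to the limiting subdifferential of the Moreau envelope e_λ f at x̄, then x̄ ∈ P_λ f(x̄) (x̄ is a fixed point of the proximal mapping) and e_λ f(x̄) = f(x̄). -/
open Filter Topology Set
open scoped ENNReal NNReal RealInnerProductSpace

noncomputable section

variable {E : Type*} [NormedAddCommGroup E] [InnerProductSpace ℝ E]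

/-- Fréchet (regular) subdifferential of an `EReal`-valued function. -/
def fsubd (f : E → EReal) (x : E) : Set E :=
  {v | f x ≠ ⊤ ∧ f x ≠ ⊥ ∧ ∀ ε : ℝ, 0 < ε → ∀ᶠ y in 𝓝 x,
      (((f x).toReal + inner ℝ v (y - x) - ε * ‖y - x‖ : ℝ) : EReal) ≤ f y}

/-- Limiting (Mordukhovich) subdifferential. -/
def lsubd (f : E → EReal) (x : E) : Set E :=
  {v | ∃ xs vs : ℕ → E, Tendsto xs atTop (𝓝 x) ∧
      Tendsto (fun k => f (xs k)) atTop (𝓝 (f x)) ∧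
      Tendsto vs atTop (𝓝 v) ∧ ∀ k, vs k ∈ fsubd f (xs k)}

/-- Sublevel set `{z | f z ≤ a}`. -/
def slev (f : E → EReal) (a : EReal) : Set E := {z | f z ≤ a}

/-- `d(0, ∂ f x)`, with the convention that the distance to the empty set is `∞`. -/
def subdist (f : E → EReal) (x : E) : ℝ≥0∞ := EMetric.infEdist 0 (lsubd f x)

/-- Conversion of an extended real to `ℝ≥0∞` (truncating negative values). -/
def toENN (a : EReal) : ℝ≥0∞ := if a = ⊤ then ⊤ else ENNReal.ofReal a.toReal

/-- Moreau envelope `e_λ f`. -/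
def moreauEnv (f : E → EReal) (lam : ℝ) (x : E) : EReal :=
  ⨅ y, f y + ((‖y - x‖ ^ 2 / (2 * lam) : ℝ) : EReal)

/-- Proximal mapping `P_λ f` (set of minimizers). -/
def proxPts (f : E → EReal) (lam : ℝ) (x : E) : Set E :=
  {y | ∀ z, f y + ((‖y - x‖ ^ 2 / (2 * lam) : ℝ) : EReal)
        ≤ f z + ((‖z - x‖ ^ 2 / (2 * lam) : ℝ) : EReal)}

/-- `f` is prox-bounded. -/
def ProxBdd (f : E → EReal) : Prop := ∃ lam > (0 : ℝ), ∃ x, moreauEnv f lam x ≠ ⊥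

/-- Threshold `λ_f` of prox-boundedness. -/
def proxThreshold (f : E → EReal) : ℝ :=
  sSup {lam | 0 < lam ∧ ∃ x, moreauEnv f lam x ≠ ⊥}

/-- `f` is proper (never `-∞`, somewhere finite). -/
def IsProperFn (f : E → EReal) : Prop := (∃ x, f x ≠ ⊤) ∧ ∀ x, f x ≠ ⊥

/-- Kurdyka–Łojasiewicz property at `xb` with exponent `γ` and constant `μ`. -/
def KLAt (f : E → EReal) (xb : E) (γ μ : ℝ) : Prop :=
  ∃ η > (0:ℝ), ∃ ν > (0:ℝ), ∀ x ∈ Metric.ball xb η,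
    f xb < f x → f x < f xb + (ν : EReal) →
    toENN (f x - f xb) ^ γ ≤ ENNReal.ofReal μ * subdist f x

/-- Level-set subdifferential error bound at `xb` with exponent `γ` and constant `μ`. -/
def LSEBAt (f : E → EReal) (xb : E) (γ μ : ℝ) : Prop :=
  ∃ η > (0:ℝ), ∃ ν > (0:ℝ), ∀ x ∈ Metric.ball xb η,
    f xb < f x → f x < f xb + (ν : EReal) →
    EMetric.infEdist x (slev f (f xb)) ^ γ ≤ ENNReal.ofReal μ * subdist f x

/-- Local Hölder error bound at `xb` with exponent `γ` and constant `μ`. -/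
def LHEBAt (f : E → EReal) (xb : E) (γ μ : ℝ) : Prop :=
  ∃ η > (0:ℝ), ∀ x ∈ Metric.ball xb η, f xb < f x →
    EMetric.infEdist x (slev f (f xb)) ^ γ ≤ ENNReal.ofReal μ * toENN (f x - f xb)

/-- Uniformized KL property on `Ω`. -/
def uKL (f : E → EReal) (Ω : Set E) (γ μ : ℝ) : Prop :=
  ∃ ε > (0:ℝ), ∃ ν > (0:ℝ), ∀ xb ∈ Ω, ∀ x, Metric.infDist x Ω < ε →
    f xb < f x → f x < f xb + (ν : EReal) →
    toENN (f x - f xb) ^ γ ≤ ENNReal.ofReal μ * subdist f x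

/-- Uniformized level-set subdifferential error bound on `Ω`. -/
def uLSEB (f : E → EReal) (Ω : Set E) (γ μ : ℝ) : Prop :=
  ∃ ε > (0:ℝ), ∃ ν > (0:ℝ), ∀ xb ∈ Ω, ∀ x, Metric.infDist x Ω < ε →
    f xb < f x → f x < f xb + (ν : EReal) →
    EMetric.infEdist x (slev f (f xb)) ^ γ ≤ ENNReal.ofReal μ * subdist f x

/-- Uniformized Hölder error bound on `Ω`. -/
def uHEB (f : E → EReal) (Ω : Set E) (γ μ : ℝ) : Prop :=
  ∃ ε > (0:ℝ), ∀ xb ∈ Ω, ∀ x, Metric.infDist x Ω < ε → f xb < f x →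
    EMetric.infEdist x (slev f (f xb)) ^ γ ≤ ENNReal.ofReal μ * toENN (f x - f xb)

/-- Prox-regularity of `f` at `xb` for `vb` with constant `ρ`. -/
def ProxRegularAt (f : E → EReal) (xb vb : E) (ρ : ℝ) : Prop :=
  vb ∈ lsubd f xb ∧ ∃ ε > (0:ℝ), ∀ x v, v ∈ lsubd f x → v ∈ Metric.ball vb ε →
    x ∈ Metric.ball xb ε → f x < f xb + (ε : EReal) → ∀ y ∈ Metric.ball xb ε,
      f x + (((inner ℝ v (y - x) : ℝ) - ρ / 2 * ‖y - x‖ ^ 2 : ℝ) : EReal) ≤ f y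



section Helpers
variable {E : Type*} [NormedAddCommGroup E] [InnerProductSpace ℝ E]

lemma add_real_le_real {u : EReal} {q s : ℝ} (hu : u ≠ ⊥) (h : u + (q:ℝ) ≤ (s:ℝ)) :
    ∃ F : ℝ, u = (F:EReal) ∧ F + q ≤ s := by
  induction u with
  | bot => exact absurd rfl hu
  | coe F =>
    refine ⟨F, rfl, ?_⟩
    rw [← EReal.coe_add] at h
    exact_mod_cast h
  | top =>
    rw [EReal.top_add_coe] at h
    exact absurd h (by simp)

lemma real_sub_le {u : EReal} {a q : ℝ} (hu : u ≠ ⊥) (h : (a:EReal) ≤ u + (q:ℝ)) :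
    ((a - q : ℝ) : EReal) ≤ u := by
  induction u with
  | bot => exact absurd rfl hu
  | coe F =>
    rw [← EReal.coe_add] at h
    have : a ≤ F + q := by exact_mod_cast h
    exact_mod_cast (by linarith only [this] : (a - q : ℝ) ≤ F)
  | top => exact le_top

lemma moreauEnv_le (f : E → EReal) (lam : ℝ) (x z : E) :
    moreauEnv f lam x ≤ f z + ((‖z - x‖ ^ 2 / (2 * lam) : ℝ) : EReal) := iInf_le _ z

lemma moreauEnv_le_self (f : E → EReal) (lam : ℝ) (x : E) :
    moreauEnv f lam x ≤ f x := by
  have := moreauEnv_le f lam x x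
  simpa using this

lemma moreauEnv_lt' {f : E → EReal} {lam : ℝ} {x : E} {w : EReal}
    (h : moreauEnv f lam x < w) :
    ∃ z, f z + ((‖z - x‖ ^ 2 / (2 * lam) : ℝ) : EReal) < w := iInf_lt_iff.mp h

lemma key_real {β θ b D₀ r u : ℝ} (hβ : 0 ≤ β) (hθ : 0 < θ) (hu : u ≤ (r+D₀)^2) :
    b - β*D₀^2 - (β*D₀)^2/θ + θ*r^2 ≤ b - u*β + r^2*(β + 2*θ) := by
  have e1 : 0 ≤ (θ*r - β*D₀)^2/θ := div_nonneg (sq_nonneg _) hθ.le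
  have e2 : (θ*r - β*D₀)^2/θ = θ*r^2 - 2*β*D₀*r + (β*D₀)^2/θ := by
    field_simp
    ring
  nlinarith [mul_nonneg hβ (sub_nonneg.mpr hu)]

lemma key2 {a F r t ε δ' lam ip nv : ℝ} (hlam : 0 < lam) (ht0 : 0 < t) (ht2 : t ≤ 1/2)
    (h1 : a + t*ip - ε*(t*r) ≤ F + ((1-t)*r)^2/(2*lam))
    (h2 : F + r^2/(2*lam) ≤ a + δ')
    (hip : -(nv*r) ≤ ip) (hnv : nv ≤ ε) (hr0 : 0 ≤ r) :
    t*r^2 ≤ 2*lam*δ' + 4*lam*ε*(t*r) := by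
  have e1 : ((1-t)*r)^2/(2*lam) = (1-t)^2*(r^2/(2*lam)) := by ring
  rw [e1] at h1
  have hQ0 : 0 ≤ r^2/(2*lam) := div_nonneg (sq_nonneg r) (by linarith only [hlam])
  have h3 : -(ε*r) ≤ ip := by nlinarith
  have h5 : t*(r^2/(2*lam)) ≤ δ' + 2*ε*(t*r) := by
    nlinarith [mul_le_mul_of_nonneg_left h3 ht0.le,
      mul_nonneg (mul_nonneg ht0.le (show (0:ℝ) ≤ 1-t by linarith only [ht2])) hQ0]
  have e2 : r^2 = 2*lam*(r^2/(2*lam)) := by field_simp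
  nlinarith [mul_le_mul_of_nonneg_left h5 (show (0:ℝ) ≤ 2*lam by linarith only [hlam])]

lemma sq_le_imp_le {r m : ℝ} (h : r^2 ≤ m) : r ≤ m + 1 := by
  nlinarith [sq_nonneg (r - 1)]

lemma aux_frac_lt {ρ M : ℝ} (hρ0 : 0 < ρ) (hM1 : 1 ≤ M) : (ρ/(2*(M+1)))*M < ρ := by
  rw [div_mul_eq_mul_div, div_lt_iff₀ (by linarith only [hM1] : (0:ℝ) < 2*(M+1))]
  nlinarith

lemma aux_M_frac {d M : ℝ} (hd : 0 ≤ d) (hM1 : 1 ≤ M) :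
    d*M/(16*(M+1)) ≤ d/16 := by
  rw [div_le_div_iff₀ (by linarith only [hM1] : (0:ℝ) < 16*(M+1)) (by norm_num : (0:ℝ) < 16)]
  nlinarith

lemma aux_r_lt {r δ : ℝ} (hr0 : 0 ≤ r) (hδ0 : 0 < δ) (h : r^2 ≤ δ^2/8) : r < δ/2 := by
  nlinarith

end Helpers

set_option maxHeartbeats 1000000 in
theorem stmt1 {n : ℕ} (f : EuclideanSpace ℝ (Fin n) → EReal)
    (hproper : IsProperFn f) (hlsc : LowerSemicontinuous f) (hpb : ProxBdd f)
    (lam : ℝ) (hlam : lam ∈ Set.Ioo 0 (proxThreshold f))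
    (xb : EuclideanSpace ℝ (Fin n)) (hdom : f xb ≠ ⊤)
    (hcrit : (0 : EuclideanSpace ℝ (Fin n)) ∈ lsubd (moreauEnv f lam) xb) :
    xb ∈ proxPts f lam xb ∧ moreauEnv f lam xb = f xb := by
  classical
  have hlam0 : 0 < lam := hlam.1
  have hnb : ∀ z, f z ≠ ⊥ := hproper.2
  -- a larger prox parameter below the threshold
  obtain ⟨l', hl'mem, hll'⟩ :=
    exists_lt_of_lt_csSup (s := {l | 0 < l ∧ ∃ x, moreauEnv f l x ≠ ⊥})
      (by obtain ⟨l, hl, x, hx⟩ := hpb; exact ⟨l, hl, x, hx⟩) hlam.2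
  obtain ⟨hl'0, x₀, hx₀⟩ := hl'mem
  obtain ⟨b, -, hbm⟩ := EReal.exists_between_coe_real (bot_lt_iff_ne_bot.mpr hx₀)
  have hb : ∀ z, ((b - ‖z - x₀‖^2/(2*l') : ℝ):EReal) ≤ f z := fun z =>
    real_sub_le (hnb z) ((le_of_lt hbm).trans (moreauEnv_le f l' x₀ z))
  set θ : ℝ := (1/(2*lam) - 1/(2*l'))/2 with hθdef
  have hθ0 : 0 < θ := by
    have h1 : 1/(2*l') < 1/(2*lam) :=
      one_div_lt_one_div_of_lt (by linarith only [hlam0]) (by linarith only [hll'])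
    rw [hθdef]; linarith only [h1]
  set D₀ : ℝ := ‖xb - x₀‖ + 1 with hD₀def
  have hD₀0 : 0 < D₀ := by rw [hD₀def]; positivity
  set b' : ℝ := b - (1/(2*l'))*D₀^2 - ((1/(2*l'))*D₀)^2/θ with hb'def
  clear_value θ D₀ b'
  -- uniform quadratic lower bound for the envelope integrand near xb
  have hB : ∀ x : EuclideanSpace ℝ (Fin n), ‖x - xb‖ ≤ 1 → ∀ z,
      ((b' + θ*‖z - x‖^2 : ℝ):EReal) ≤ f z + ((‖z - x‖^2/(2*lam):ℝ):EReal) := by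
    intro x hx z
    have h2 : ((b - ‖z - x₀‖^2/(2*l') + ‖z - x‖^2/(2*lam) : ℝ):EReal)
        ≤ f z + ((‖z - x‖^2/(2*lam):ℝ):EReal) := by
      rw [EReal.coe_add]
      exact add_le_add_left (hb z) _
    refine le_trans ?_ h2
    rw [EReal.coe_le_coe_iff]
    have t1 : ‖z - x₀‖ ≤ ‖z - x‖ + ‖x - x₀‖ := by
      simpa [dist_eq_norm] using dist_triangle z x x₀
    have t2 : ‖x - x₀‖ ≤ ‖x - xb‖ + ‖xb - x₀‖ := by
      simpa [dist_eq_norm] using dist_triangle x xb x₀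
    have h3 : ‖z - x₀‖ ≤ ‖z - x‖ + D₀ := by
      rw [hD₀def]; linarith only [t1, t2, hx]
    have hu : ‖z - x₀‖^2 ≤ (‖z - x‖ + D₀)^2 := pow_le_pow_left₀ (norm_nonneg _) h3 2
    have hk := key_real (b := b)
      (show (0:ℝ) ≤ 1/(2*l') from one_div_nonneg.mpr (by linarith only [hl'0])) hθ0 hu
    have hc1 : ‖z - x₀‖^2*(1/(2*l')) = ‖z - x₀‖^2/(2*l') := mul_one_div _ _
    have hc2 : ‖z - x‖^2*((1/(2*l'))+2*θ) = ‖z - x‖^2/(2*lam) := by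
      rw [hθdef]; ring
    rw [hb'def]
    linarith only [hk, hc1, hc2]
  -- f xb is real
  set fxbR : ℝ := (f xb).toReal with hfxbR
  have hfxb : f xb = (fxbR : EReal) := (EReal.coe_toReal hdom (hnb xb)).symm
  clear_value fxbR
  have env_le : ∀ x : EuclideanSpace ℝ (Fin n),
      moreauEnv f lam x ≤ ((fxbR + ‖xb - x‖^2/(2*lam) : ℝ):EReal) := by
    intro x
    have := moreauEnv_le f lam x xb
    rwa [hfxb, ← EReal.coe_add] at this
  have env_ne_top : ∀ x : EuclideanSpace ℝ (Fin n), moreauEnv f lam x ≠ ⊤ :=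
    fun x => ne_top_of_le_ne_top (EReal.coe_ne_top _) (env_le x)
  set K : ℝ := fxbR + 1/(2*lam) with hKdef
  clear_value K
  have env_ub : ∀ x : EuclideanSpace ℝ (Fin n), ‖x - xb‖ ≤ 1 →
      moreauEnv f lam x ≤ (K:EReal) := by
    intro x hx
    refine le_trans (env_le x) ?_
    rw [EReal.coe_le_coe_iff, hKdef]
    have h1 : ‖xb - x‖ ≤ 1 := by rwa [norm_sub_rev]
    have h2 : ‖xb - x‖^2 ≤ 1 := by
      simpa using pow_le_pow_left₀ (norm_nonneg _) h1 2
    have h3 : ‖xb - x‖^2/(2*lam) ≤ 1/(2*lam) :=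
      div_le_div_of_nonneg_right h2 (by linarith only [hlam0])
    linarith only [h2, h3]
  set M2 : ℝ := max ((K + 1 - b')/θ) 0 with hM2def
  set M : ℝ := M2 + 1 with hMdef
  clear_value M2 M
  have hM2_0 : 0 ≤ M2 := by rw [hM2def]; exact le_max_right _ _
  have hM1 : 1 ≤ M := by rw [hMdef]; linarith only [hM2_0]
  -- the envelope at xb is a real number
  have henvxb_ne_bot : moreauEnv f lam xb ≠ ⊥ := by
    intro hcon
    have h1 : ((b':ℝ):EReal) ≤ moreauEnv f lam xb := by
      refine le_iInf fun z => le_trans ?_ (hB xb (by simp) z)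
      exact EReal.coe_le_coe_iff.mpr
        (le_add_of_nonneg_right (mul_nonneg hθ0.le (sq_nonneg _)))
    rw [hcon] at h1
    exact absurd h1 (by simp)
  set eb : ℝ := (moreauEnv f lam xb).toReal with hebdef
  clear_value eb
  have hexb : moreauEnv f lam xb = (eb:EReal) := by
    rw [hebdef]; exact (EReal.coe_toReal (env_ne_top xb) henvxb_ne_bot).symm
  -- the key inequality
  have key : f xb ≤ moreauEnv f lam xb := by
    by_contra hkey
    push_neg at hkey
    obtain ⟨c, hc1, hc2⟩ := EReal.exists_between_coe_real hkey
    have hebc : eb < c := by rw [hexb] at hc1; exact_mod_cast hc1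
    obtain ⟨δ, hδ0, hδ⟩ := Metric.eventually_nhds_iff.mp (hlsc xb (c:EReal) hc2)
    set σ : ℝ := c - eb with hσdef
    clear_value σ
    have hσ0 : 0 < σ := by rw [hσdef]; linarith only [hebc]
    obtain ⟨xs, vs, hxs, henv, hvs, hsub⟩ := hcrit
    set ε : ℝ := δ^2/(64*lam*(M+1)) with hεdef
    clear_value ε
    have hMpos : 0 < M + 1 := by linarith only [hM1]
    have hε0 : 0 < ε := by
      rw [hεdef]
      exact div_pos (pow_pos hδ0 2) (mul_pos (by linarith only [hlam0]) hMpos)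
    have ev1 : ∀ᶠ k in atTop, dist (xs k) xb < min (δ/2) 1 :=
      (Metric.tendsto_nhds.mp hxs) _ (lt_min (half_pos hδ0) one_pos)
    have ev2 : ∀ᶠ k in atTop, dist (vs k) 0 < ε := (Metric.tendsto_nhds.mp hvs) ε hε0
    have ev3 : ∀ᶠ k in atTop, moreauEnv f lam (xs k) < ((eb + σ/2 : ℝ):EReal) := by
      refine Filter.Tendsto.eventually_lt_const ?_ henv
      rw [hexb]
      exact_mod_cast (by linarith only [hσ0] : eb < eb + σ/2)
    obtain ⟨k, hk1, hk2, hk3⟩ := (ev1.and (ev2.and ev3)).exists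
    obtain ⟨hnetop, hnebot, hfs⟩ := hsub k
    set x := xs k with hxdef
    set v := vs k with hvdef
    set a : ℝ := (moreauEnv f lam x).toReal with hadef
    clear_value x v a
    have hax : moreauEnv f lam x = (a:EReal) := by
      rw [hadef]; exact (EReal.coe_toReal hnetop hnebot).symm
    have hxxb : ‖x - xb‖ < min (δ/2) 1 := by rwa [dist_eq_norm] at hk1
    have hxxb1 : ‖x - xb‖ ≤ 1 := le_of_lt (lt_of_lt_of_le hxxb (min_le_right _ _))
    have hxxbδ : ‖x - xb‖ < δ/2 := lt_of_lt_of_le hxxb (min_le_left _ _)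
    have hvnorm : ‖v‖ < ε := by rwa [dist_zero_right] at hk2
    have haub : a < eb + σ/2 := by rw [hax] at hk3; exact_mod_cast hk3
    have haK : a ≤ K := by
      have := env_ub x hxxb1
      rw [hax] at this
      exact_mod_cast this
    obtain ⟨ρ, hρ0, hρ⟩ := Metric.eventually_nhds_iff.mp (hfs ε hε0)
    set t : ℝ := min (ρ/(2*(M+1))) (1/2) with htdef
    have ht0 : 0 < t :=
      lt_min (div_pos hρ0 (by linarith only [hM1])) one_half_pos
    have ht2 : t ≤ 1/2 := min_le_right _ _
    have htle : t ≤ ρ/(2*(M+1)) := min_le_left _ _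
    clear_value t
    set δ' : ℝ := min (min (σ/4) 1) (t*δ^2/(32*lam)) with hδ'def
    have hδ'0 : 0 < δ' :=
      lt_min (lt_min (by linarith only [hσ0]) one_pos)
        (div_pos (mul_pos ht0 (pow_pos hδ0 2)) (by linarith only [hlam0]))
    have hδ'σ : δ' ≤ σ/4 := le_trans (min_le_left _ _) (min_le_left _ _)
    have hδ'1 : δ' ≤ 1 := le_trans (min_le_left _ _) (min_le_right _ _)
    have hδ't : δ' ≤ t*δ^2/(32*lam) := min_le_right _ _
    clear_value δ'
    have hlt : moreauEnv f lam x < ((a + δ':ℝ):EReal) := by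
      rw [hax]
      exact_mod_cast lt_add_of_pos_right a hδ'0
    obtain ⟨z, hz⟩ := moreauEnv_lt' hlt
    obtain ⟨F, hFz, hF⟩ := add_real_le_real (hnb z) hz.le
    set r : ℝ := ‖z - x‖ with hrdef
    have hr0 : 0 ≤ r := by rw [hrdef]; exact norm_nonneg _
    clear_value r
    have hBz' : b' + θ*r^2 ≤ F + r^2/(2*lam) := by
      have hBz := hB x hxxb1 z
      rw [hFz, ← EReal.coe_add, ← hrdef] at hBz
      exact_mod_cast hBz
    have hrM2 : r^2 ≤ M2 := by
      have h1 : θ*r^2 ≤ K + 1 - b' := by linarith only [hBz', hF, haK, hδ'1]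
      have h2 : r^2 ≤ (K + 1 - b')/θ := by
        rw [le_div_iff₀ hθ0, mul_comm]; linarith only [h1]
      rw [hM2def]
      exact le_trans h2 (le_max_left _ _)
    have hrM : r ≤ M := by rw [hMdef]; exact sq_le_imp_le hrM2
    set y : EuclideanSpace ℝ (Fin n) := x + t • (z - x) with hydef
    have hyx : y - x = t • (z - x) := by rw [hydef]; abel
    have hdyx : dist y x < ρ := by
      rw [dist_eq_norm, hyx, norm_smul, Real.norm_eq_abs, abs_of_pos ht0, ← hrdef]
      have h1 : t*r ≤ (ρ/(2*(M+1)))*M :=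
        mul_le_mul htle hrM hr0 (div_nonneg hρ0.le (by linarith only [hM1]))
      have h2 : (ρ/(2*(M+1)))*M < ρ := aux_frac_lt hρ0 hM1
      linarith only [h1, h2]
    have hey : moreauEnv f lam y ≤ ((F + ‖z - y‖^2/(2*lam):ℝ):EReal) := by
      have := moreauEnv_le f lam y z
      rwa [hFz, ← EReal.coe_add] at this
    have e1 : (inner ℝ v (y - x) : ℝ) = t*(inner ℝ v (z - x) : ℝ) := by
      rw [hyx, real_inner_smul_right]
    have e2 : ‖y - x‖ = t*r := by
      rw [hyx, norm_smul, Real.norm_eq_abs, abs_of_pos ht0, ← hrdef]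
    have e3 : ‖z - y‖ = (1-t)*r := by
      have hzy : z - y = (1-t) • (z - x) := by
        rw [hydef, sub_smul, one_smul]; abel
      rw [hzy, norm_smul, Real.norm_eq_abs,
        abs_of_nonneg (by linarith only [ht2] : (0:ℝ) ≤ 1-t), ← hrdef]
    have hreal : a + t*(inner ℝ v (z - x) : ℝ) - ε*(t*r) ≤ F + ((1-t)*r)^2/(2*lam) := by
      have hcomb := le_trans (hρ hdyx) hey
      rw [e1, e2, e3] at hcomb
      exact_mod_cast hcomb
    have hip : -(‖v‖*r) ≤ (inner ℝ v (z - x) : ℝ) := by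
      have h1 := abs_real_inner_le_norm v (z - x)
      have h2 := neg_abs_le (inner ℝ v (z - x) : ℝ)
      rw [← hrdef] at h1
      linarith only [h1, h2]
    have hkey2 := key2 hlam0 ht0 ht2 hreal hF hip hvnorm.le hr0
    -- deduce r < δ/2
    have h2ld : 2*lam*δ' ≤ t*(δ^2/16) := by
      have h0 := mul_le_mul_of_nonneg_left hδ't
        (show (0:ℝ) ≤ 2*lam by linarith only [hlam0])
      have he : 2*lam*(t*δ^2/(32*lam)) = t*(δ^2/16) := by
        field_simp [hlam0.ne']
        ring
      rw [he] at h0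
      exact h0
    have h4le : 4*lam*ε*(t*r) ≤ t*(4*lam*ε*M) := by
      have h1 : (0:ℝ) ≤ 4*lam*ε := by positivity
      have h2 : t*r ≤ t*M := mul_le_mul_of_nonneg_left hrM ht0.le
      have h3 := mul_le_mul_of_nonneg_left h2 h1
      have he : 4*lam*ε*(t*M) = t*(4*lam*ε*M) := by ring
      linarith only [h3, he]
    have hεM : 4*lam*ε*M ≤ δ^2/16 := by
      have he : 4*lam*ε*M = δ^2*M/(16*(M+1)) := by
        rw [hεdef]
        field_simp [hlam0.ne', hMpos.ne']
        ring
      rw [he]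
      exact aux_M_frac (sq_nonneg δ) hM1
    have hr2 : r^2 ≤ δ^2/8 := by
      have h1 := mul_le_mul_of_nonneg_left hεM ht0.le
      have he : t*(δ^2/16) + t*(δ^2/16) = t*(δ^2/8) := by ring
      have h2 : t*r^2 ≤ t*(δ^2/8) := by linarith only [hkey2, h2ld, h4le, h1, he]
      exact le_of_mul_le_mul_left (by linarith only [h2]) ht0
    have hrδ : r < δ/2 := aux_r_lt hr0 hδ0 hr2
    -- contradiction with lower semicontinuity
    have hzb : dist z xb < δ := by
      rw [dist_eq_norm]
      have h1 : ‖z - xb‖ ≤ ‖z - x‖ + ‖x - xb‖ := by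
        simpa [dist_eq_norm] using dist_triangle z x xb
      rw [← hrdef] at h1
      linarith only [h1, hrδ, hxxbδ]
    have hcz : (c:EReal) < f z := hδ hzb
    rw [hFz] at hcz
    have hFc : c < F := by exact_mod_cast hcz
    have hq0 : 0 ≤ r^2/(2*lam) := div_nonneg (sq_nonneg r) (by linarith only [hlam0])
    have hσeq : σ = c - eb := hσdef
    linarith only [hFc, hF, hq0, haub, hδ'σ, hσeq, hσ0]
  refine ⟨?_, le_antisymm (moreauEnv_le_self f lam xb) key⟩
  intro z
  have h0 : f xb + ((‖xb - xb‖^2/(2*lam):ℝ):EReal) = f xb := by simp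
  rw [h0]
  exact key.trans (moreauEnv_le f lam xb z)


end
end

section
/- Let f : ℝⁿ → ℝ ∪ {∞} be proper and lower semicontinuous, and Ω ⊆ dom ∂f a nonempty compact set on which f is constant. If f satisfies the level-set subdifferential error bound (LSEB) at each point of Ω, then f satisfies the uniformized level-set subdifferential error bound (u-LSEB) on Ω: there exist γ ≥ 0, μ > 0, ε > 0, ν > 0 such that d(x, {z : f(z) ≤ f(x̄)})^γ ≤ μ · d(0, ∂f(x)) for every x̄ ∈ Ω and every x with d(x, Ω) < ε and f(x̄) < f(x) < f(x̄) + ν. -/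
open Filter Topology Set
open scoped ENNReal NNReal RealInnerProductSpace

noncomputable section

variable {E : Type*} [NormedAddCommGroup E] [InnerProductSpace ℝ E]

theorem stmt4 {n : ℕ} (f : EuclideanSpace ℝ (Fin n) → EReal)
    (hproper : IsProperFn f) (hlsc : LowerSemicontinuous f)
    (Ω : Set (EuclideanSpace ℝ (Fin n))) (hne : Ω.Nonempty) (hcpt : IsCompact Ω)
    (hdom : ∀ x ∈ Ω, (lsubd f x).Nonempty)
    (hconst : ∀ x ∈ Ω, ∀ y ∈ Ω, f x = f y)
    (hl : ∀ xb ∈ Ω, ∃ γ ≥ (0:ℝ), ∃ μ > (0:ℝ), LSEBAt f xb γ μ) :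
    ∃ γ ≥ (0:ℝ), ∃ μ > (0:ℝ), uLSEB f Ω γ μ := by
  classical
  have hl' : ∀ xb : EuclideanSpace ℝ (Fin n), ∃ γ : ℝ, 0 ≤ γ ∧ ∃ μ : ℝ, 0 < μ ∧ ∃ η : ℝ, 0 < η ∧
      ∃ ν : ℝ, 0 < ν ∧
      (xb ∈ Ω → ∀ x ∈ Metric.ball xb η, f xb < f x → f x < f xb + (ν : EReal) →
        EMetric.infEdist x (slev f (f xb)) ^ γ ≤ ENNReal.ofReal μ * subdist f x) := by
    intro xb
    by_cases hxb : xb ∈ Ω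
    · obtain ⟨γ, hγ, μ, hμ, η, hη, ν, hν, h⟩ := hl xb hxb
      exact ⟨γ, hγ, μ, hμ, η, hη, ν, hν, fun _ => h⟩
    · exact ⟨0, le_refl 0, 1, one_pos, 1, one_pos, 1, one_pos, fun h => absurd h hxb⟩
  choose γf hγf μf hμf ηf hηf νf hνf hLS using hl'
  have hcov : Ω ⊆ ⋃ i ∈ Ω, Metric.ball i (ηf i / 2) := fun z hz =>
    Set.mem_biUnion hz (Metric.mem_ball_self (by have := hηf z; linarith))
  obtain ⟨b, hbΩ, hbfin, hbcov⟩ := hcpt.elim_finite_subcover_image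
    (fun i _ => Metric.isOpen_ball) hcov
  have hbne : b.Nonempty := by
    obtain ⟨z, hz⟩ := hne
    obtain ⟨i, hi, _⟩ := Set.mem_iUnion₂.mp (hbcov hz)
    exact ⟨i, hi⟩
  set t : Finset _ := hbfin.toFinset with ht
  have htne : t.Nonempty := by
    obtain ⟨i, hi⟩ := hbne
    exact ⟨i, hbfin.mem_toFinset.mpr hi⟩
  refine ⟨t.sup' htne γf, ?_, max 1 (t.sup' htne μf), lt_of_lt_of_le one_pos (le_max_left _ _),
    min 1 (t.inf' htne fun i => ηf i / 2), ?_, t.inf' htne νf, ?_, ?_⟩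
  · obtain ⟨i, hi⟩ := htne
    exact le_trans (hγf i) (Finset.le_sup' γf hi)
  · refine lt_min one_pos ?_
    obtain ⟨i, hi, hval⟩ := Finset.exists_mem_eq_inf' htne (fun i => ηf i / 2)
    rw [hval]; have := hηf i; linarith
  · obtain ⟨i, hi, hval⟩ := Finset.exists_mem_eq_inf' htne νf
    rw [hval]; exact hνf i
  intro xb hxbΩ x hx hfx1 hfx2
  obtain ⟨z, hzΩ, hzx⟩ := (Metric.infDist_lt_iff hne).mp hx
  obtain ⟨i, hib, hzi⟩ := Set.mem_iUnion₂.mp (hbcov hzΩ)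
  have hit : i ∈ t := hbfin.mem_toFinset.mpr hib
  have hiΩ : i ∈ Ω := hbΩ hib
  have hfi : f i = f xb := hconst i hiΩ xb hxbΩ
  have hxi : x ∈ Metric.ball i (ηf i) := by
    rw [Metric.mem_ball] at hzi ⊢
    have h1 : dist x i ≤ dist x z + dist z i := dist_triangle x z i
    have h2 : min 1 (t.inf' htne fun j => ηf j / 2) ≤ ηf i / 2 :=
      le_trans (min_le_right _ _) (Finset.inf'_le _ hit)
    linarith
  have hfx2' : f x < f i + (νf i : EReal) := by
    rw [hfi]
    refine lt_of_lt_of_le hfx2 (add_le_add_right ?_ _)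
    exact_mod_cast Finset.inf'_le νf hit
  have key := hLS i hiΩ x hxi (hfi ▸ hfx1) hfx2'
  rw [hfi] at key
  have ha1 : EMetric.infEdist x (slev f (f xb)) ≤ 1 := by
    have hzmem : z ∈ slev f (f xb) := le_of_eq (hconst z hzΩ xb hxbΩ)
    refine le_trans (EMetric.infEdist_le_edist_of_mem hzmem) ?_
    rw [edist_dist]
    refine le_trans (ENNReal.ofReal_le_ofReal ?_) (le_of_eq ENNReal.ofReal_one)
    have : dist x z < min 1 (t.inf' htne fun j => ηf j / 2) := hzx
    have := min_le_left (1:ℝ) (t.inf' htne fun j => ηf j / 2)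
    linarith
  calc EMetric.infEdist x (slev f (f xb)) ^ t.sup' htne γf
      ≤ EMetric.infEdist x (slev f (f xb)) ^ γf i :=
        ENNReal.rpow_le_rpow_of_exponent_ge ha1 (Finset.le_sup' γf hit)
    _ ≤ ENNReal.ofReal (μf i) * subdist f x := key
    _ ≤ ENNReal.ofReal (max 1 (t.sup' htne μf)) * subdist f x := by
        refine mul_le_mul_left (ENNReal.ofReal_le_ofReal ?_) _
        exact le_trans (Finset.le_sup' μf hit) (le_max_right _ _)

end
end

section
/- Let f : ℝⁿ → ℝ ∪ {∞} be proper and lower semicontinuous, and Ω ⊆ dom f a nonempty compact set on which f takes a constant value. If f satisfies the local Hölder error bound (LHEB) at each point of Ω, then f satisfies the uniformized Hölder error bound (u-HEB) on Ω: there exist γ > 0, μ > 0, ε > 0 such that d(x, {z : f(z) ≤ f(x̄)})^γ ≤ μ (f(x) - f(x̄)) for every x̄ ∈ Ω and every x with d(x, Ω) < ε and f(x) > f(x̄). -/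
open Filter Topology Set
open scoped ENNReal NNReal RealInnerProductSpace

noncomputable section

variable {E : Type*} [NormedAddCommGroup E] [InnerProductSpace ℝ E]

theorem stmt5 {n : ℕ} (f : EuclideanSpace ℝ (Fin n) → EReal)
    (hproper : IsProperFn f) (hlsc : LowerSemicontinuous f)
    (Ω : Set (EuclideanSpace ℝ (Fin n))) (hne : Ω.Nonempty) (hcpt : IsCompact Ω)
    (hdom : ∀ x ∈ Ω, f x ≠ ⊤)
    (hconst : ∀ x ∈ Ω, ∀ y ∈ Ω, f x = f y)
    (hl : ∀ xb ∈ Ω, ∃ γ > (0:ℝ), ∃ μ > (0:ℝ), LHEBAt f xb γ μ) :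
    ∃ γ > (0:ℝ), ∃ μ > (0:ℝ), uHEB f Ω γ μ := by
  classical
  -- Choose local data at each point of Ω
  have hl' : ∀ xb ∈ Ω, ∃ γ : ℝ, 0 < γ ∧ ∃ μ : ℝ, 0 < μ ∧ ∃ η : ℝ, 0 < η ∧
      ∀ x ∈ Metric.ball xb η, f xb < f x →
        EMetric.infEdist x (slev f (f xb)) ^ γ ≤ ENNReal.ofReal μ * toENN (f x - f xb) := by
    intro xb hxb
    obtain ⟨γ, hγ, μ, hμ, η, hη, H⟩ := hl xb hxb
    exact ⟨γ, hγ, μ, hμ, η, hη, H⟩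
  choose! γ hγ μ hμ η hη H using hl'
  -- Cover Ω by finitely many half-radius balls
  obtain ⟨t, ht⟩ := hcpt.elim_nhds_subcover' (fun x hx => Metric.ball x (η x / 2))
    (fun x hx => Metric.ball_mem_nhds x (by linarith [hη x hx]))
  have htne : t.Nonempty := by
    obtain ⟨z, hz⟩ := hne
    obtain ⟨i, hi, _⟩ := Set.mem_iUnion₂.mp (ht hz)
    exact ⟨i, hi⟩
  refine ⟨t.sup' htne (fun i => γ i.1), ?_, t.sup' htne (fun i => μ i.1), ?_,
    min 1 (t.inf' htne (fun i => η i.1 / 2)), ?_, ?_⟩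
  · obtain ⟨i, hi⟩ := htne
    exact lt_of_lt_of_le (hγ i.1 i.2) (Finset.le_sup' (fun j => γ j.1) hi)
  · obtain ⟨i, hi⟩ := htne
    exact lt_of_lt_of_le (hμ i.1 i.2) (Finset.le_sup' (fun j => μ j.1) hi)
  · refine lt_min one_pos ((Finset.lt_inf'_iff htne).mpr ?_)
    intro i hi
    linarith [hη i.1 i.2]
  intro xb hxb x hx hfx
  set ε : ℝ := min 1 (t.inf' htne (fun i => η i.1 / 2)) with hεdef
  -- nearest point y in Ω
  obtain ⟨y, hyΩ, hyd⟩ := hcpt.exists_infDist_eq_dist hne x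
  have hxy : dist x y < ε := by rw [← hyd]; exact hx
  -- y lies in some half ball
  obtain ⟨i, hi, hyi⟩ := Set.mem_iUnion₂.mp (ht hyΩ)
  have hεhalf : ε ≤ η i.1 / 2 := le_trans (min_le_right _ _) (Finset.inf'_le _ hi)
  have hxi : x ∈ Metric.ball i.1 (η i.1) := by
    rw [Metric.mem_ball] at hyi ⊢
    calc dist x i.1 ≤ dist x y + dist y i.1 := dist_triangle _ _ _
      _ < ε + η i.1 / 2 := by linarith
      _ ≤ η i.1 := by linarith
  have hfeq : f i.1 = f xb := hconst i.1 i.2 xb hxb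
  have hflt : f i.1 < f x := hfeq ▸ hfx
  have key := H i.1 i.2 x hxi hflt
  rw [hfeq] at key
  -- d ≤ 1
  have hd1 : EMetric.infEdist x (slev f (f xb)) ≤ 1 := by
    have hy_mem : y ∈ slev f (f xb) := by
      show f y ≤ f xb
      exact le_of_eq (hconst y hyΩ xb hxb)
    refine le_trans (EMetric.infEdist_le_edist_of_mem hy_mem) ?_
    rw [edist_dist]
    refine le_trans (ENNReal.ofReal_le_ofReal hxy.le) ?_
    calc ENNReal.ofReal ε ≤ ENNReal.ofReal 1 :=
          ENNReal.ofReal_le_ofReal (min_le_left _ _)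
      _ = 1 := ENNReal.ofReal_one
  calc EMetric.infEdist x (slev f (f xb)) ^ (t.sup' htne (fun i => γ i.1))
      ≤ EMetric.infEdist x (slev f (f xb)) ^ (γ i.1) :=
        ENNReal.rpow_le_rpow_of_exponent_ge hd1 (Finset.le_sup' (fun j => γ j.1) hi)
    _ ≤ ENNReal.ofReal (μ i.1) * toENN (f x - f xb) := key
    _ ≤ ENNReal.ofReal (t.sup' htne (fun i => μ i.1)) * toENN (f x - f xb) :=
        mul_le_mul_left (ENNReal.ofReal_le_ofReal (Finset.le_sup' (fun j => μ j.1) hi)) _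

end
end

section
/- Let f : ℝⁿ → ℝ ∪ {∞} be proper and lower semicontinuous and suppose f satisfies the level-set subdifferential error bound (LSEB) at x̄ with exponent γ₂ ≥ 0 and constant μ₂ > 0. Then f satisfies the local Hölder error bound (LHEB) at x̄ with exponent γ₃ = γ₂ + 1 and constant μ₃ = ((γ₂+1)^{γ₂+1} / γ₂^{γ₂}) μ₂. -/
open Filter Topology Set
open scoped ENNReal NNReal RealInnerProductSpace

noncomputable section

variable {E : Type*} [NormedAddCommGroup E] [InnerProductSpace ℝ E]

/-- Every Fréchet subgradient is a limiting subgradient (take constant sequences). -/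
lemma my_fsubd_subset_lsubd (f : E → EReal) (u : E) : fsubd f u ⊆ lsubd f u :=
  fun v hv => ⟨fun _ => u, fun _ => v, tendsto_const_nhds, tendsto_const_nhds,
    tendsto_const_nhds, fun _ => hv⟩

/-- A lower semicontinuous `EReal`-valued function attains its minimum on a
nonempty compact set. -/
lemma my_lsc_exists_min_on_compact {α : Type*} [TopologicalSpace α] {K : Set α}
    (hK : IsCompact K) (hne : K.Nonempty) {F : α → EReal}
    (hF : LowerSemicontinuous F) : ∃ u ∈ K, ∀ y ∈ K, F u ≤ F y := by
  by_contra hcon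
  push_neg at hcon
  have hch : ∀ u : K, ∃ y, y ∈ K ∧ F y < F u.1 := fun u => by
    obtain ⟨y, hy, hy'⟩ := hcon u.1 u.2; exact ⟨y, hy, hy'⟩
  choose y hyK hylt using hch
  have hUopen : ∀ u : K, IsOpen (F ⁻¹' Ioi (F (y u))) := fun u => hF.isOpen_preimage _
  have hcover : K ⊆ ⋃ u : K, F ⁻¹' Ioi (F (y u)) := fun z hz =>
    mem_iUnion.2 ⟨⟨z, hz⟩, hylt ⟨z, hz⟩⟩
  obtain ⟨t, ht⟩ := hK.elim_finite_subcover _ hUopen hcover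
  have htne : t.Nonempty := by
    obtain ⟨z, hz⟩ := hne
    have := ht hz
    simp only [mem_iUnion] at this
    obtain ⟨u, hu, -⟩ := this
    exact ⟨u, hu⟩
  obtain ⟨u₀, hu₀t, hu₀min⟩ := t.exists_min_image (fun u => F (y u)) htne
  have := ht (hyK u₀)
  simp only [mem_iUnion] at this
  obtain ⟨u₁, hu₁t, hu₁⟩ := this
  exact absurd (hu₀min u₁ hu₁t) (not_le.2 hu₁)

/-- Smoothed proximal step: minimizing `f + c • √(‖·-x‖² + β²)` on a closed
ball yields a point which either lies on the boundary, or admits a limiting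
subgradient of norm at most `c`. -/
lemma my_coreProx [ProperSpace E] (f : E → EReal) (hbot : ∀ z, f z ≠ ⊥)
    (hlsc : LowerSemicontinuous f) (x : E) (hfx : f x ≠ ⊤)
    {c β R : ℝ} (hc : 0 < c) (hβ : 0 < β) (hR : 0 < R) :
    ∃ u : E, dist u x ≤ R ∧
      f u + ((c * Real.sqrt (‖u - x‖ ^ 2 + β ^ 2) : ℝ) : EReal)
        ≤ f x + ((c * β : ℝ) : EReal) ∧
      (dist u x < R → ∃ v ∈ lsubd f u, ‖v‖ ≤ c) := by
  classical
  set pen : E → ℝ := fun y => c * Real.sqrt (‖y - x‖ ^ 2 + β ^ 2) with hpen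
  have hpencont : Continuous pen := by
    apply continuous_const.mul
    exact (((continuous_id.sub continuous_const).norm.pow 2).add continuous_const).sqrt
  have hFlsc : LowerSemicontinuous fun y => f y + ((pen y : ℝ) : EReal) := by
    refine hlsc.add' (Continuous.lowerSemicontinuous ?_) fun z =>
      EReal.continuousAt_add (Or.inr (by simp)) (Or.inl (hbot z))
    exact continuous_coe_real_ereal.comp hpencont
  obtain ⟨u, huK, humin⟩ := my_lsc_exists_min_on_compact (isCompact_closedBall x R)
    ⟨x, Metric.mem_closedBall_self hR.le⟩ hFlsc
  have hFx : f x + ((pen x : ℝ) : EReal) = f x + ((c * β : ℝ) : EReal) := by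
    have : pen x = c * β := by
      simp [hpen, Real.sqrt_sq hβ.le]
    rw [this]
  have hux : f u + ((pen u : ℝ) : EReal) ≤ f x + ((c * β : ℝ) : EReal) := by
    rw [← hFx]; exact humin x (Metric.mem_closedBall_self hR.le)
  have hudist : dist u x ≤ R := Metric.mem_closedBall.1 huK
  refine ⟨u, hudist, hux, ?_⟩
  intro hlt
  obtain ⟨ax, hax⟩ : ∃ ax : ℝ, f x = (ax : EReal) :=
    ⟨(f x).toReal, (EReal.coe_toReal hfx (hbot x)).symm⟩
  have hfu_top : f u ≠ ⊤ := by
    intro h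
    rw [h, EReal.top_add_coe, hax, ← EReal.coe_add, top_le_iff] at hux
    exact EReal.coe_ne_top _ hux
  obtain ⟨A, hA⟩ : ∃ A : ℝ, f u = (A : EReal) :=
    ⟨(f u).toReal, (EReal.coe_toReal hfu_top (hbot u)).symm⟩
  set Δ : E := u - x with hΔ
  set q : ℝ := Real.sqrt (‖Δ‖ ^ 2 + β ^ 2) with hqdef
  have hqpos : 0 < q := Real.sqrt_pos.2 (by positivity)
  set w : E := (c / q) • Δ with hw
  have hnw : ‖w‖ ≤ c := by
    rw [hw, norm_smul]
    have h1 : ‖Δ‖ ≤ q := by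
      rw [hqdef]
      calc ‖Δ‖ = Real.sqrt (‖Δ‖ ^ 2) := (Real.sqrt_sq (norm_nonneg _)).symm
      _ ≤ _ := Real.sqrt_le_sqrt (by nlinarith [sq_nonneg β])
    have : |c / q| = c / q := abs_of_pos (by positivity)
    rw [Real.norm_eq_abs, this]
    calc c / q * ‖Δ‖ ≤ c / q * q := by
          apply mul_le_mul_of_nonneg_left h1 (by positivity)
      _ = c := by field_simp
  have hd1 : HasFDerivAt (fun y : E => ‖y - x‖ ^ 2 + β ^ 2)
      ((2 : ℕ) • (innerSL ℝ Δ).comp (ContinuousLinearMap.id ℝ E)) u := by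
    simpa [hΔ] using (((hasFDerivAt_id u).sub_const x).norm_sq).add_const (β ^ 2)
  have hd2 := hd1.sqrt (by positivity)
  have hd3 := hd2.const_mul c
  have hL : c • ((1 / (2 * Real.sqrt (‖u - x‖ ^ 2 + β ^ 2))) •
      ((2 : ℕ) • (innerSL ℝ Δ).comp (ContinuousLinearMap.id ℝ E))) = innerSL ℝ w := by
    ext h
    simp only [ContinuousLinearMap.smul_apply, ContinuousLinearMap.coe_smul', Pi.smul_apply,
      ContinuousLinearMap.coe_comp', Function.comp_apply, ContinuousLinearMap.coe_id', id_eq,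
      innerSL_apply_apply, smul_eq_mul, hw, real_inner_smul_left, ← hΔ, ← hqdef]
    field_simp
    ring
  have hd : HasFDerivAt pen (innerSL ℝ w) u := by
    rw [← hL]; exact hd3
  set v : E := -w with hv
  refine ⟨v, my_fsubd_subset_lsubd f u ?_, by rw [hv, norm_neg]; exact hnw⟩
  refine ⟨hfu_top, hbot u, ?_⟩
  intro ε hε
  have h1 : ∀ᶠ y in 𝓝 u, ‖pen y - pen u - (innerSL ℝ w) (y - u)‖ ≤ ε * ‖y - u‖ := by
    have h2 := hd.isLittleO
    rw [Asymptotics.isLittleO_iff] at h2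
    exact h2 hε
  have h2 : ∀ᶠ y in 𝓝 u, y ∈ Metric.ball x R :=
    Metric.isOpen_ball.mem_nhds (by rwa [Metric.mem_ball])
  filter_upwards [h1, h2] with y hy1 hy2
  by_cases hyt : f y = ⊤
  · rw [hyt]; exact le_top
  obtain ⟨B, hB⟩ : ∃ B : ℝ, f y = (B : EReal) :=
    ⟨(f y).toReal, (EReal.coe_toReal hyt (hbot y)).symm⟩
  have hmin := humin y (Metric.ball_subset_closedBall hy2)
  rw [hA, hB, ← EReal.coe_add, ← EReal.coe_add, EReal.coe_le_coe_iff] at hmin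
  have htoReal : (f u).toReal = A := by rw [hA]; exact EReal.toReal_coe A
  rw [hB, htoReal, EReal.coe_le_coe_iff]
  have hvinner : (inner ℝ v (y - u) : ℝ) = - inner ℝ w (y - u) := by
    rw [hv, inner_neg_left]
  have hiw : (innerSL ℝ w) (y - u) = (inner ℝ w (y - u) : ℝ) := rfl
  rw [hiw, Real.norm_eq_abs] at hy1
  have habs := abs_le.1 hy1
  rw [hvinner]
  linarith [habs.1, habs.2]

/-- Real-number algebra behind the choice of the prox parameter. -/
lemma my_key_algebra {γ μ r : ℝ} (hγ : 0 < γ) (hμ : 0 < μ) (hr : 0 < r) :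
    0 < (μ * r / γ ^ γ) ^ (γ+1)⁻¹ ∧
    μ * (r / ((μ * r / γ ^ γ) ^ (γ+1)⁻¹)) = (γ * ((μ * r / γ ^ γ) ^ (γ+1)⁻¹)) ^ γ ∧
    ((γ+1) * ((μ * r / γ ^ γ) ^ (γ+1)⁻¹)) ^ (γ+1) = ((γ+1)^(γ+1)/γ^γ * μ) * r := by
  have hgg : (0:ℝ) < γ ^ γ := Real.rpow_pos_of_pos hγ γ
  have hbase : (0:ℝ) < μ * r / γ ^ γ := by positivity
  set Q : ℝ := (μ * r / γ ^ γ) ^ (γ+1)⁻¹ with hQdef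
  have hQ : 0 < Q := Real.rpow_pos_of_pos hbase _
  have hγ1 : γ + 1 ≠ 0 := by positivity
  have hQpow : Q ^ (γ+1) = μ * r / γ ^ γ := Real.rpow_inv_rpow hbase.le hγ1
  have hQsplit : Q ^ (γ+1) = Q ^ γ * Q := by
    rw [Real.rpow_add hQ, Real.rpow_one]
  refine ⟨hQ, ?_, ?_⟩
  · rw [Real.mul_rpow hγ.le hQ.le]
    have h1 : γ ^ γ * (Q ^ γ * Q) = μ * r := by
      rw [← hQsplit, hQpow]; field_simp
    field_simp
    nlinarith [h1]
  · rw [Real.mul_rpow (by positivity : (0:ℝ) ≤ γ+1) hQ.le, hQpow]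
    field_simp


set_option maxHeartbeats 1000000 in
theorem stmt7 {n : ℕ} (f : EuclideanSpace ℝ (Fin n) → EReal)
    (hproper : IsProperFn f) (hlsc : LowerSemicontinuous f)
    (xb : EuclideanSpace ℝ (Fin n)) (γ₂ μ₂ : ℝ) (hγ : 0 ≤ γ₂) (hμ : 0 < μ₂)
    (h : LSEBAt f xb γ₂ μ₂) :
    LHEBAt f xb (γ₂ + 1) ((γ₂ + 1) ^ (γ₂ + 1) / γ₂ ^ γ₂ * μ₂) := by
  classical
  obtain ⟨η, hη, ν, hν, hLS⟩ := h
  have hbot := hproper.2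
  by_cases hxbtop : f xb = ⊤
  · exact ⟨1, one_pos, fun x _ hlt => absurd hlt (by rw [hxbtop]; exact not_top_lt)⟩
  obtain ⟨b, hb⟩ : ∃ b : ℝ, f xb = (b : EReal) :=
    ⟨(f xb).toReal, (EReal.coe_toReal hxbtop (hbot xb)).symm⟩
  have hxbS : xb ∈ slev f (f xb) := le_refl (f xb)
  rcases eq_or_lt_of_le hγ with hγ0 | hγpos
  · -- ================= case γ₂ = 0 =================
    subst hγ0
    obtain ⟨ν', hν'def⟩ : ∃ v : ℝ, v = min ν (η / (8 * μ₂)) := ⟨_, rfl⟩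
    have hν'pos : 0 < ν' := by rw [hν'def]; exact lt_min hν (by positivity)
    have hν'ν : ν' ≤ ν := by rw [hν'def]; exact min_le_left _ _
    have hν'η : μ₂ * ν' ≤ η / 8 := by
      rw [hν'def]
      calc μ₂ * min ν (η / (8 * μ₂)) ≤ μ₂ * (η / (8 * μ₂)) :=
            mul_le_mul_of_nonneg_left (min_le_right _ _) hμ.le
        _ = η / 8 := by field_simp
    obtain ⟨η', hη'def⟩ : ∃ e : ℝ, e = min (η / 2) (μ₂ * ν') := ⟨_, rfl⟩
    have hη'pos : 0 < η' := by rw [hη'def]; exact lt_min (by positivity) (by positivity)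
    have hη'half : η' ≤ η / 2 := by rw [hη'def]; exact min_le_left _ _
    have hη'mu : η' ≤ μ₂ * ν' := by rw [hη'def]; exact min_le_right _ _
    refine ⟨η', hη'pos, ?_⟩
    intro x hx hgap
    rw [show ((0:ℝ) + 1) = (1:ℝ) by norm_num, ENNReal.rpow_one]
    have hconst : ((1:ℝ)) ^ ((1:ℝ)) / (0:ℝ) ^ (0:ℝ) * μ₂ = μ₂ := by
      rw [Real.one_rpow, Real.rpow_zero]; ring
    rw [hconst]
    by_cases hxt : f x = ⊤
    · have : toENN (f x - f xb) = ⊤ := by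
        rw [hxt, hb, EReal.top_sub_coe]; rfl
      rw [this, ENNReal.mul_top (ENNReal.ofReal_pos.2 hμ).ne']
      exact le_top
    obtain ⟨a, ha⟩ : ∃ a : ℝ, f x = (a : EReal) :=
      ⟨(f x).toReal, (EReal.coe_toReal hxt (hbot x)).symm⟩
    have hba : b < a := by
      rw [ha, hb] at hgap; exact_mod_cast hgap
    obtain ⟨r, hrdef, hr⟩ : ∃ r : ℝ, r = a - b ∧ 0 < r := ⟨a - b, rfl, by linarith⟩
    have htoENN : toENN (f x - f xb) = ENNReal.ofReal r := by
      have hcoe : f x - f xb = ((a - b : ℝ) : EReal) := by rw [ha, hb]; rfl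
      rw [hcoe, hrdef]
      simp only [toENN]
      rw [if_neg (EReal.coe_ne_top _), EReal.toReal_coe]
    rw [htoENN, ← ENNReal.ofReal_mul hμ.le]
    have hxd : dist x xb < η' := Metric.mem_ball.1 hx
    rcases le_or_gt ν' r with hrbig | hrsmall
    · -- large gap : trivial from the radius bound
      calc EMetric.infEdist x (slev f (f xb)) ≤ edist x xb :=
            EMetric.infEdist_le_edist_of_mem hxbS
        _ = ENNReal.ofReal (dist x xb) := edist_dist x xb
        _ ≤ ENNReal.ofReal (μ₂ * ν') :=
            ENNReal.ofReal_le_ofReal (le_trans hxd.le hη'mu)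
        _ ≤ ENNReal.ofReal (μ₂ * r) :=
            ENNReal.ofReal_le_ofReal (mul_le_mul_of_nonneg_left hrbig hμ.le)
    · -- small gap : prox argument
      apply ENNReal.le_of_forall_pos_le_add
      intro ε' hε' _
      obtain ⟨ε, hεdef⟩ : ∃ e : ℝ, e = min (ε' : ℝ) (η / 8) := ⟨_, rfl⟩
      have hεpos : 0 < ε := by
        rw [hεdef]; exact lt_min (by exact_mod_cast hε') (by positivity)
      have hεle : ε ≤ η / 8 := by rw [hεdef]; exact min_le_right _ _
      suffices hmain : EMetric.infEdist x (slev f (f xb)) ≤ ENNReal.ofReal (μ₂ * r + ε) by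
        calc EMetric.infEdist x (slev f (f xb)) ≤ ENNReal.ofReal (μ₂ * r + ε) := hmain
          _ ≤ ENNReal.ofReal (μ₂ * r) + ENNReal.ofReal ε := ENNReal.ofReal_add_le
          _ ≤ ENNReal.ofReal (μ₂ * r) + ε' := by
              gcongr
              calc ENNReal.ofReal ε ≤ ENNReal.ofReal (ε' : ℝ) :=
                    ENNReal.ofReal_le_ofReal (by rw [hεdef]; exact min_le_left _ _)
                _ = ε' := ENNReal.ofReal_coe_nnreal
      obtain ⟨c, hcdef⟩ : ∃ c : ℝ, c = r / (μ₂ * r + ε / 2) := ⟨_, rfl⟩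
      have hcpos : 0 < c := by rw [hcdef]; positivity
      obtain ⟨R, hRdef⟩ : ∃ R : ℝ, R = μ₂ * r + ε := ⟨_, rfl⟩
      have hRpos : 0 < R := by rw [hRdef]; positivity
      obtain ⟨u, hud, hmin, hsubg⟩ := my_coreProx f hbot hlsc x hxt hcpos
        (show (0:ℝ) < ε / 4 by linarith) hRpos
      by_cases huS : u ∈ slev f (f xb)
      · calc EMetric.infEdist x (slev f (f xb)) ≤ edist x u :=
              EMetric.infEdist_le_edist_of_mem huS
          _ = ENNReal.ofReal (dist x u) := edist_dist x u
          _ ≤ ENNReal.ofReal (μ₂ * r + ε) := by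
              rw [dist_comm, ← hRdef]; exact ENNReal.ofReal_le_ofReal hud
      · exfalso
        have hfu_top : f u ≠ ⊤ := by
          intro htop
          rw [htop, EReal.top_add_coe, ha, ← EReal.coe_add, top_le_iff] at hmin
          exact EReal.coe_ne_top _ hmin
        obtain ⟨A, hA⟩ : ∃ A : ℝ, f u = (A : EReal) :=
          ⟨(f u).toReal, (EReal.coe_toReal hfu_top (hbot u)).symm⟩
        have hkey : A + c * Real.sqrt (‖u - x‖ ^ 2 + (ε/4) ^ 2) ≤ a + c * (ε/4) := by
          rw [hA, ha, ← EReal.coe_add, ← EReal.coe_add, EReal.coe_le_coe_iff] at hmin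
          exact hmin
        have hnorm_le : ‖u - x‖ ≤ Real.sqrt (‖u - x‖ ^ 2 + (ε/4) ^ 2) := by
          calc ‖u - x‖ = Real.sqrt (‖u - x‖ ^ 2) := (Real.sqrt_sq (norm_nonneg _)).symm
            _ ≤ _ := Real.sqrt_le_sqrt (le_add_of_nonneg_right (by positivity))
        have hbA : b < A := by
          have h1 : ¬ f u ≤ f xb := huS
          rw [hA, hb, EReal.coe_le_coe_iff] at h1
          linarith [not_le.1 h1]
        have hsq4 : ε / 4 ≤ Real.sqrt (‖u - x‖ ^ 2 + (ε/4) ^ 2) := by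
          calc ε / 4 = Real.sqrt ((ε/4) ^ 2) := (Real.sqrt_sq (by linarith)).symm
            _ ≤ _ := Real.sqrt_le_sqrt (le_add_of_nonneg_left (by positivity))
        have hAa : A ≤ a := by
          have := mul_le_mul_of_nonneg_left hsq4 hcpos.le
          linarith
        have hdux : dist u x < R := by
          have h1 : c * ‖u - x‖ ≤ (a - A) + c * (ε/4) := by
            linarith [mul_le_mul_of_nonneg_left hnorm_le hcpos.le]
          have h2 : a - A < r := by rw [hrdef]; linarith
          have hrc2 : c * (μ₂ * r + ε / 2) = r := by
            rw [hcdef]; field_simp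
          have hdistrib : c * (μ₂ * r + ε / 2 + ε / 4) = c * (μ₂ * r + ε / 2) + c * (ε / 4) := by
            ring
          have h4 : c * ‖u - x‖ < c * (μ₂ * r + ε / 2 + ε / 4) := by
            rw [hdistrib, hrc2]; linarith
          have h3 : ‖u - x‖ < μ₂ * r + ε / 2 + ε / 4 := (mul_lt_mul_iff_right₀ hcpos).1 h4
          rw [dist_eq_norm, hRdef]
          linarith
        obtain ⟨v, hvmem, hvnorm⟩ := hsubg hdux
        have huball : u ∈ Metric.ball xb η := by
          rw [Metric.mem_ball]
          have hRle : R ≤ η / 4 := by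
            have h2 : μ₂ * r ≤ μ₂ * ν' := mul_le_mul_of_nonneg_left hrsmall.le hμ.le
            rw [hRdef]; linarith
          calc dist u xb ≤ dist u x + dist x xb := dist_triangle u x xb
            _ < R + η' := by linarith
            _ ≤ η / 4 + η / 2 := by linarith
            _ < η := by linarith
        have hgapu1 : f xb < f u := by
          rw [hA, hb]; exact_mod_cast hbA
        have hgapu2 : f u < f xb + (ν : EReal) := by
          rw [hA, hb, ← EReal.coe_add, EReal.coe_lt_coe_iff]
          have h5 : r < ν := lt_of_lt_of_le hrsmall hν'ν
          rw [hrdef] at h5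
          linarith
        have hls := hLS u huball hgapu1 hgapu2
        rw [ENNReal.rpow_zero] at hls
        have hsubd : subdist f u ≤ ENNReal.ofReal c := by
          calc subdist f u ≤ edist 0 v := EMetric.infEdist_le_edist_of_mem hvmem
            _ = ENNReal.ofReal (dist 0 v) := edist_dist 0 v
            _ ≤ ENNReal.ofReal c := by
                rw [dist_zero_left]; exact ENNReal.ofReal_le_ofReal hvnorm
        have hcontra : (1 : ℝ≥0∞) ≤ ENNReal.ofReal (μ₂ * c) := by
          rw [ENNReal.ofReal_mul hμ.le]
          exact le_trans hls (mul_le_mul_right hsubd _)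
        have hlt1 : μ₂ * c < 1 := by
          rw [hcdef, mul_div_assoc']
          rw [div_lt_one (by positivity)]
          linarith
        exact absurd hcontra (not_le.2 (ENNReal.ofReal_lt_one.2 hlt1))
  · -- ================= case γ₂ > 0 =================
    have hγγpos : (0:ℝ) < γ₂ ^ γ₂ := Real.rpow_pos_of_pos hγpos _
    have hγ1pos : (0:ℝ) < γ₂ + 1 := by linarith
    have hμ₃pos : 0 < (γ₂ + 1) ^ (γ₂ + 1) / γ₂ ^ γ₂ * μ₂ := by
      have h1 : (0:ℝ) < (γ₂+1) ^ (γ₂+1) := Real.rpow_pos_of_pos hγ1pos _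
      positivity
    obtain ⟨ν', hν'def⟩ : ∃ v : ℝ,
        v = min ν ((η / (8 * (γ₂+1))) ^ (γ₂+1) * γ₂ ^ γ₂ / μ₂) := ⟨_, rfl⟩
    have hν'pos : 0 < ν' := by
      rw [hν'def]
      refine lt_min hν ?_
      have h1 : (0:ℝ) < (η / (8 * (γ₂+1))) ^ (γ₂+1) :=
        Real.rpow_pos_of_pos (by positivity) _
      positivity
    have hν'ν : ν' ≤ ν := by rw [hν'def]; exact min_le_left _ _
    -- the key smallness property : for r ≤ ν', (γ₂+1) * Q r ≤ η/8
    have hQsmall : ∀ r : ℝ, 0 < r → r ≤ ν' →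
        (γ₂ + 1) * (μ₂ * r / γ₂ ^ γ₂) ^ (γ₂+1)⁻¹ ≤ η / 8 := by
      intro r hrpos hrle
      have hbase : (0:ℝ) < μ₂ * r / γ₂ ^ γ₂ := by positivity
      have hY : (0:ℝ) < η / (8 * (γ₂+1)) := by positivity
      have h1 : μ₂ * r / γ₂ ^ γ₂ ≤ (η / (8 * (γ₂+1))) ^ (γ₂+1) := by
        have h2 : r ≤ (η / (8 * (γ₂+1))) ^ (γ₂+1) * γ₂ ^ γ₂ / μ₂ :=
          le_trans hrle (by rw [hν'def]; exact min_le_right _ _)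
        rw [div_le_iff₀ hγγpos]
        have h2' : μ₂ * r ≤ (η / (8 * (γ₂+1))) ^ (γ₂+1) * γ₂ ^ γ₂ := by
          calc μ₂ * r ≤ μ₂ * ((η / (8 * (γ₂+1))) ^ (γ₂+1) * γ₂ ^ γ₂ / μ₂) :=
                mul_le_mul_of_nonneg_left h2 hμ.le
            _ = (η / (8 * (γ₂+1))) ^ (γ₂+1) * γ₂ ^ γ₂ := by field_simp
        linarith
      have h3 : (μ₂ * r / γ₂ ^ γ₂) ^ (γ₂+1)⁻¹ ≤ η / (8 * (γ₂+1)) := by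
        calc (μ₂ * r / γ₂ ^ γ₂) ^ (γ₂+1)⁻¹
            ≤ ((η / (8 * (γ₂+1))) ^ (γ₂+1)) ^ (γ₂+1)⁻¹ :=
              Real.rpow_le_rpow hbase.le h1 (by positivity)
          _ = η / (8 * (γ₂+1)) := Real.rpow_rpow_inv hY.le (by positivity)
      calc (γ₂ + 1) * (μ₂ * r / γ₂ ^ γ₂) ^ (γ₂+1)⁻¹
          ≤ (γ₂ + 1) * (η / (8 * (γ₂+1))) := by
            exact mul_le_mul_of_nonneg_left h3 (by positivity)
        _ = η / 8 := by field_simp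
    obtain ⟨η', hη'def⟩ : ∃ e : ℝ,
        e = min (η / 2) ((((γ₂+1) ^ (γ₂+1) / γ₂ ^ γ₂ * μ₂) * ν') ^ (γ₂+1)⁻¹) := ⟨_, rfl⟩
    have hη'pos : 0 < η' := by
      rw [hη'def]
      exact lt_min (by positivity) (Real.rpow_pos_of_pos (by positivity) _)
    have hη'half : η' ≤ η / 2 := by rw [hη'def]; exact min_le_left _ _
    have hη'mu : η' ≤ (((γ₂+1) ^ (γ₂+1) / γ₂ ^ γ₂ * μ₂) * ν') ^ (γ₂+1)⁻¹ := by
      rw [hη'def]; exact min_le_right _ _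
    refine ⟨η', hη'pos, ?_⟩
    intro x hx hgap
    by_cases hxt : f x = ⊤
    · have : toENN (f x - f xb) = ⊤ := by
        rw [hxt, hb, EReal.top_sub_coe]; rfl
      rw [this, ENNReal.mul_top (ENNReal.ofReal_pos.2 hμ₃pos).ne']
      exact le_top
    obtain ⟨a, ha⟩ : ∃ a : ℝ, f x = (a : EReal) :=
      ⟨(f x).toReal, (EReal.coe_toReal hxt (hbot x)).symm⟩
    have hba : b < a := by
      rw [ha, hb] at hgap; exact_mod_cast hgap
    obtain ⟨r, hrdef, hr⟩ : ∃ r : ℝ, r = a - b ∧ 0 < r := ⟨a - b, rfl, by linarith⟩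
    have htoENN : toENN (f x - f xb) = ENNReal.ofReal r := by
      have hcoe : f x - f xb = ((a - b : ℝ) : EReal) := by rw [ha, hb]; rfl
      rw [hcoe, hrdef]
      simp only [toENN]
      rw [if_neg (EReal.coe_ne_top _), EReal.toReal_coe]
    rw [htoENN]
    have hxd : dist x xb < η' := Metric.mem_ball.1 hx
    rcases le_or_gt ν' r with hrbig | hrsmall
    · -- large gap : trivial from the radius bound
      calc EMetric.infEdist x (slev f (f xb)) ^ (γ₂ + 1)
          ≤ (ENNReal.ofReal ((((γ₂+1) ^ (γ₂+1) / γ₂ ^ γ₂ * μ₂) * ν') ^ (γ₂+1)⁻¹)) ^ (γ₂+1) := by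
            apply ENNReal.rpow_le_rpow _ hγ1pos.le
            calc EMetric.infEdist x (slev f (f xb)) ≤ edist x xb :=
                  EMetric.infEdist_le_edist_of_mem hxbS
              _ = ENNReal.ofReal (dist x xb) := edist_dist x xb
              _ ≤ _ := ENNReal.ofReal_le_ofReal (le_trans hxd.le hη'mu)
        _ = ENNReal.ofReal (((((γ₂+1) ^ (γ₂+1) / γ₂ ^ γ₂ * μ₂) * ν') ^ (γ₂+1)⁻¹) ^ (γ₂+1)) :=
            ENNReal.ofReal_rpow_of_pos (Real.rpow_pos_of_pos (by positivity) _)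
        _ = ENNReal.ofReal (((γ₂+1) ^ (γ₂+1) / γ₂ ^ γ₂ * μ₂) * ν') := by
            rw [Real.rpow_inv_rpow (by positivity) hγ1pos.ne']
        _ ≤ ENNReal.ofReal (((γ₂+1) ^ (γ₂+1) / γ₂ ^ γ₂ * μ₂) * r) :=
            ENNReal.ofReal_le_ofReal (mul_le_mul_of_nonneg_left hrbig hμ₃pos.le)
        _ = _ := ENNReal.ofReal_mul hμ₃pos.le
    · -- small gap : prox argument
      obtain ⟨hQpos, hQc, hQfinal⟩ := my_key_algebra hγpos hμ hr
      obtain ⟨Q, hQdef⟩ : ∃ q : ℝ, q = (μ₂ * r / γ₂ ^ γ₂) ^ (γ₂+1)⁻¹ := ⟨_, rfl⟩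
      rw [← hQdef] at hQpos hQc hQfinal
      have hQη : (γ₂ + 1) * Q ≤ η / 8 := by
        rw [hQdef]; exact hQsmall r hr hrsmall.le
      suffices hS : EMetric.infEdist x (slev f (f xb)) ≤ ENNReal.ofReal ((γ₂ + 1) * Q) by
        calc EMetric.infEdist x (slev f (f xb)) ^ (γ₂ + 1)
            ≤ (ENNReal.ofReal ((γ₂ + 1) * Q)) ^ (γ₂ + 1) :=
              ENNReal.rpow_le_rpow hS hγ1pos.le
          _ = ENNReal.ofReal (((γ₂ + 1) * Q) ^ (γ₂ + 1)) :=
              ENNReal.ofReal_rpow_of_pos (by positivity)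
          _ = ENNReal.ofReal (((γ₂+1) ^ (γ₂+1) / γ₂ ^ γ₂ * μ₂) * r) := by rw [hQfinal]
          _ = _ := ENNReal.ofReal_mul hμ₃pos.le
      apply ENNReal.le_of_forall_pos_le_add
      intro ε' hε' _
      obtain ⟨ε, hεdef⟩ : ∃ e : ℝ, e = min (ε' : ℝ) (η / 8) := ⟨_, rfl⟩
      have hεpos : 0 < ε := by
        rw [hεdef]; exact lt_min (by exact_mod_cast hε') (by positivity)
      have hεle : ε ≤ η / 8 := by rw [hεdef]; exact min_le_right _ _
      suffices hmain : EMetric.infEdist x (slev f (f xb)) ≤ ENNReal.ofReal ((γ₂+1) * Q + ε) by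
        calc EMetric.infEdist x (slev f (f xb)) ≤ ENNReal.ofReal ((γ₂+1) * Q + ε) := hmain
          _ ≤ ENNReal.ofReal ((γ₂+1) * Q) + ENNReal.ofReal ε := ENNReal.ofReal_add_le
          _ ≤ ENNReal.ofReal ((γ₂+1) * Q) + ε' := by
              gcongr
              calc ENNReal.ofReal ε ≤ ENNReal.ofReal (ε' : ℝ) :=
                    ENNReal.ofReal_le_ofReal (by rw [hεdef]; exact min_le_left _ _)
                _ = ε' := ENNReal.ofReal_coe_nnreal
      obtain ⟨c, hcdef⟩ : ∃ c : ℝ, c = r / Q := ⟨_, rfl⟩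
      have hcpos : 0 < c := by rw [hcdef]; positivity
      have hrc : c * Q = r := by rw [hcdef]; field_simp
      obtain ⟨R, hRdef⟩ : ∃ R : ℝ, R = (γ₂+1) * Q + ε := ⟨_, rfl⟩
      have hRpos : 0 < R := by rw [hRdef]; positivity
      obtain ⟨u, hud, hmin, hsubg⟩ := my_coreProx f hbot hlsc x hxt hcpos
        (show (0:ℝ) < ε / 2 by linarith) hRpos
      by_cases huS : u ∈ slev f (f xb)
      · calc EMetric.infEdist x (slev f (f xb)) ≤ edist x u :=
              EMetric.infEdist_le_edist_of_mem huS
          _ = ENNReal.ofReal (dist x u) := edist_dist x u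
          _ ≤ ENNReal.ofReal ((γ₂+1) * Q + ε) := by
              rw [dist_comm, ← hRdef]; exact ENNReal.ofReal_le_ofReal hud
      · have hfu_top : f u ≠ ⊤ := by
          intro htop
          rw [htop, EReal.top_add_coe, ha, ← EReal.coe_add, top_le_iff] at hmin
          exact EReal.coe_ne_top _ hmin
        obtain ⟨A, hA⟩ : ∃ A : ℝ, f u = (A : EReal) :=
          ⟨(f u).toReal, (EReal.coe_toReal hfu_top (hbot u)).symm⟩
        have hkey : A + c * Real.sqrt (‖u - x‖ ^ 2 + (ε/2) ^ 2) ≤ a + c * (ε/2) := by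
          rw [hA, ha, ← EReal.coe_add, ← EReal.coe_add, EReal.coe_le_coe_iff] at hmin
          exact hmin
        have hnorm_le : ‖u - x‖ ≤ Real.sqrt (‖u - x‖ ^ 2 + (ε/2) ^ 2) := by
          calc ‖u - x‖ = Real.sqrt (‖u - x‖ ^ 2) := (Real.sqrt_sq (norm_nonneg _)).symm
            _ ≤ _ := Real.sqrt_le_sqrt (le_add_of_nonneg_right (by positivity))
        have hbA : b < A := by
          have h1 : ¬ f u ≤ f xb := huS
          rw [hA, hb, EReal.coe_le_coe_iff] at h1
          linarith [not_le.1 h1]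
        have hdQ : ‖u - x‖ < Q + ε / 2 := by
          have h1 : c * ‖u - x‖ ≤ (a - A) + c * (ε/2) := by
            linarith [mul_le_mul_of_nonneg_left hnorm_le hcpos.le]
          have h2 : a - A < r := by rw [hrdef]; linarith
          have hdistrib : c * (Q + ε / 2) = c * Q + c * (ε / 2) := by ring
          have h4 : c * ‖u - x‖ < c * (Q + ε / 2) := by
            rw [hdistrib, hrc]; linarith
          exact (mul_lt_mul_iff_right₀ hcpos).1 h4
        have hdux : dist u x < R := by
          rw [dist_eq_norm, hRdef]
          have hgQ : 0 < γ₂ * Q := mul_pos hγpos hQpos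
          have hid : (γ₂ + 1) * Q = γ₂ * Q + Q := by ring
          linarith
        obtain ⟨v, hvmem, hvnorm⟩ := hsubg hdux
        have huball : u ∈ Metric.ball xb η := by
          rw [Metric.mem_ball]
          have hRle : R ≤ η / 4 := by rw [hRdef]; linarith
          have hd1 : dist u x ≤ R := hud
          calc dist u xb ≤ dist u x + dist x xb := dist_triangle u x xb
            _ < R + η' := by linarith
            _ ≤ η / 4 + η / 2 := by linarith
            _ < η := by linarith
        have hgapu1 : f xb < f u := by
          rw [hA, hb]; exact_mod_cast hbA
        have hgapu2 : f u < f xb + (ν : EReal) := by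
          rw [hA, hb, ← EReal.coe_add, EReal.coe_lt_coe_iff]
          have hsq2 : ε / 2 ≤ Real.sqrt (‖u - x‖ ^ 2 + (ε/2) ^ 2) := by
            calc ε / 2 = Real.sqrt ((ε/2) ^ 2) := (Real.sqrt_sq (by linarith)).symm
              _ ≤ _ := Real.sqrt_le_sqrt (le_add_of_nonneg_left (by positivity))
          have hAa : A ≤ a := by
            have := mul_le_mul_of_nonneg_left hsq2 hcpos.le
            linarith
          have h5 : r < ν := lt_of_lt_of_le hrsmall hν'ν
          rw [hrdef] at h5
          linarith
        have hls := hLS u huball hgapu1 hgapu2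
        have hsubd : subdist f u ≤ ENNReal.ofReal c := by
          calc subdist f u ≤ edist 0 v := EMetric.infEdist_le_edist_of_mem hvmem
            _ = ENNReal.ofReal (dist 0 v) := edist_dist 0 v
            _ ≤ ENNReal.ofReal c := by
                rw [dist_zero_left]; exact ENNReal.ofReal_le_ofReal hvnorm
        have hstep : EMetric.infEdist u (slev f (f xb)) ≤ ENNReal.ofReal (γ₂ * Q) := by
          rw [← ENNReal.rpow_le_rpow_iff hγpos]
          calc EMetric.infEdist u (slev f (f xb)) ^ γ₂
              ≤ ENNReal.ofReal μ₂ * subdist f u := hls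
            _ ≤ ENNReal.ofReal μ₂ * ENNReal.ofReal c := mul_le_mul_right hsubd _
            _ = ENNReal.ofReal (μ₂ * c) := (ENNReal.ofReal_mul hμ.le).symm
            _ = ENNReal.ofReal ((γ₂ * Q) ^ γ₂) := by
                rw [show μ₂ * c = (γ₂ * Q) ^ γ₂ by rw [hcdef]; exact hQc]
            _ = ENNReal.ofReal (γ₂ * Q) ^ γ₂ :=
                (ENNReal.ofReal_rpow_of_pos (by positivity)).symm
        calc EMetric.infEdist x (slev f (f xb))
            ≤ edist x u + EMetric.infEdist u (slev f (f xb)) :=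
              EMetric.infEdist_le_edist_add_infEdist
          _ ≤ ENNReal.ofReal (Q + ε/2) + ENNReal.ofReal (γ₂ * Q) := by
              refine add_le_add ?_ hstep
              rw [edist_dist, dist_comm, dist_eq_norm]
              exact ENNReal.ofReal_le_ofReal hdQ.le
          _ = ENNReal.ofReal ((Q + ε/2) + γ₂ * Q) :=
              (ENNReal.ofReal_add (by positivity) (by positivity)).symm
          _ ≤ ENNReal.ofReal ((γ₂+1) * Q + ε) :=
              ENNReal.ofReal_le_ofReal (by
                have hid : (γ₂ + 1) * Q = γ₂ * Q + Q := by ring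
                linarith)

end
end

section
/- Let f : ℝⁿ → ℝ ∪ {∞} be proper and lower semicontinuous with 0 ∈ ∂f(x̄), and suppose f is prox-regular at x̄ for v̄ = 0 with constant ρ ≥ 0. If f satisfies the level-set subdifferential error bound at x̄ with exponent γ₂ > 0 and constant μ₂ > 0, then f satisfies the Kurdyka–Łojasiewicz property at x̄ with exponent γ₁ = max{γ₂/(1+γ₂), γ₂/2} and constant μ₁ = (μ₂^{1/γ₂} + (ρ/2) μ₂^{2/γ₂})^{max{γ₂/(1+γ₂), γ₂/2}}. -/
open Filter Topology Set
open scoped ENNReal NNReal RealInnerProductSpace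

noncomputable section

variable {E : Type*} [NormedAddCommGroup E] [InnerProductSpace ℝ E]

/-- Auxiliary: to bound `b ≤ a * infEdist x s` it suffices to bound against each point. -/
lemma le_mul_infEdist' {α : Type*} [PseudoEMetricSpace α] {a b : ℝ≥0∞} (h0 : a ≠ 0) (ht : a ≠ ⊤)
    {s : Set α} {x : α} (H : ∀ y ∈ s, b ≤ a * edist x y) : b ≤ a * EMetric.infEdist x s := by
  have h1 : b / a ≤ EMetric.infEdist x s := by
    refine EMetric.le_infEdist.2 ?_
    intro y hy
    rw [ENNReal.div_le_iff_le_mul (Or.inl h0) (Or.inl ht), mul_comm]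
    exact H y hy
  calc b = a * (b / a) := (ENNReal.mul_div_cancel h0 ht).symm
    _ ≤ _ := mul_le_mul_right h1 a


theorem stmt9 {n : ℕ} (f : EuclideanSpace ℝ (Fin n) → EReal)
    (hproper : IsProperFn f) (hlsc : LowerSemicontinuous f)
    (xb : EuclideanSpace ℝ (Fin n)) (h0 : (0 : EuclideanSpace ℝ (Fin n)) ∈ lsubd f xb)
    (ρ : ℝ) (hρ : 0 ≤ ρ) (hpr : ProxRegularAt f xb 0 ρ)
    (γ₂ μ₂ : ℝ) (hγ : 0 < γ₂) (hμ : 0 < μ₂)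
    (h : LSEBAt f xb γ₂ μ₂) :
    KLAt f xb (max (γ₂ / (1 + γ₂)) (γ₂ / 2))
      ((μ₂ ^ (1 / γ₂) + ρ / 2 * μ₂ ^ (2 / γ₂)) ^ (max (γ₂ / (1 + γ₂)) (γ₂ / 2))) := by
  classical
  set γ₁ := max (γ₂ / (1 + γ₂)) (γ₂ / 2) with hγ₁def
  set C := μ₂ ^ (1 / γ₂) + ρ / 2 * μ₂ ^ (2 / γ₂) with hCdef
  have hγ₁ : 0 < γ₁ := lt_of_lt_of_le (by positivity : (0:ℝ) < γ₂ / 2) (le_max_right _ _)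
  have hC : 0 < C := by
    have h1 : 0 < μ₂ ^ (1 / γ₂) := Real.rpow_pos_of_pos hμ _
    have h2 : 0 ≤ μ₂ ^ (2 / γ₂) := (Real.rpow_pos_of_pos hμ _).le
    have h3 : 0 ≤ ρ / 2 * μ₂ ^ (2 / γ₂) := mul_nonneg (by linarith) h2
    rw [hCdef]; linarith
  have hμ₁ : 0 < C ^ γ₁ := Real.rpow_pos_of_pos hC γ₁
  by_cases htop : f xb = ⊤
  · exact ⟨1, one_pos, 1, one_pos, fun x _ hlt _ =>
      absurd hlt (by rw [htop]; exact not_top_lt)⟩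
  obtain ⟨-, ε, hε, hprox⟩ := hpr
  obtain ⟨η₂, hη₂, ν₂, hν₂, hLS⟩ := h
  set r := min ε 1 with hrdef
  have hr : 0 < r := lt_min hε one_pos
  set ν := min (min ε ν₂) ((C ^ γ₁ * r) ^ (1 / γ₁)) with hνdef
  have hν : 0 < ν := by
    apply lt_min (lt_min hε hν₂)
    positivity
  refine ⟨min (ε / 2) η₂, by positivity, ν, hν, ?_⟩
  intro x hx hfl hfu
  have hdistx : dist x xb < min (ε / 2) η₂ := Metric.mem_ball.mp hx
  -- finiteness of values
  have hbotxb : f xb ≠ ⊥ := hproper.2 xb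
  set q := (f xb).toReal with hqdef
  have hq : f xb = (q : EReal) := (EReal.coe_toReal htop hbotxb).symm
  have hxtop : f x ≠ ⊤ := by
    rw [hq, ← EReal.coe_add] at hfu
    exact (hfu.trans (EReal.coe_lt_top _)).ne
  set p := (f x).toReal with hpdef
  have hp : f x = (p : EReal) := (EReal.coe_toReal hxtop (hproper.2 x)).symm
  have hqp : q < p := by
    rw [hq, hp] at hfl; exact EReal.coe_lt_coe_iff.mp hfl
  have hpq : p < q + ν := by
    rw [hq, hp, ← EReal.coe_add] at hfu; exact EReal.coe_lt_coe_iff.mp hfu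
  set a := p - q with hadef
  have ha : 0 < a := sub_pos.mpr hqp
  have haν : a < ν := by simp only [hadef]; linarith
  have htoENN : toENN (f x - f xb) = ENNReal.ofReal a := by
    rw [hp, hq, ← EReal.coe_sub]
    simp only [toENN, if_neg (EReal.coe_ne_top _), EReal.toReal_coe, hadef]
  rw [htoENN]
  -- reduce to a bound against each subgradient
  refine le_mul_infEdist' (ENNReal.ofReal_pos.mpr hμ₁).ne' ENNReal.ofReal_ne_top ?_
  intro v hv
  have hedist : edist (0 : EuclideanSpace ℝ (Fin n)) v = ENNReal.ofReal ‖v‖ := by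
    rw [edist_comm, edist_dist, dist_zero_right]
  rw [hedist, ENNReal.ofReal_rpow_of_pos ha, ← ENNReal.ofReal_mul hμ₁.le]
  apply ENNReal.ofReal_le_ofReal
  -- goal is now a real inequality : a ^ γ₁ ≤ C ^ γ₁ * ‖v‖
  by_cases hvr : r ≤ ‖v‖
  · -- large subgradient case
    have h1 : a ≤ (C ^ γ₁ * r) ^ (1 / γ₁) :=
      le_of_lt (haν.trans_le (min_le_right _ _))
    calc a ^ γ₁ ≤ ((C ^ γ₁ * r) ^ (1 / γ₁)) ^ γ₁ := Real.rpow_le_rpow ha.le h1 hγ₁.le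
      _ = C ^ γ₁ * r := by
          rw [← Real.rpow_mul (by positivity), one_div_mul_cancel hγ₁.ne', Real.rpow_one]
      _ ≤ C ^ γ₁ * ‖v‖ := mul_le_mul_of_nonneg_left hvr hμ₁.le
  · push_neg at hvr
    -- small subgradient case
    set S := slev f (f xb) with hSdef
    have hxbS : xb ∈ S := by
      simp only [hSdef, slev, Set.mem_setOf_eq]; exact le_rfl
    have hSclosed : IsClosed S := hlsc.isClosed_preimage (f xb)
    obtain ⟨y, hyS, hyd⟩ := hSclosed.exists_infDist_eq_dist ⟨xb, hxbS⟩ x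
    set d := Metric.infDist x S with hddef
    have hd0 : 0 ≤ d := Metric.infDist_nonneg
    have hdxb : d ≤ dist x xb := Metric.infDist_le_dist_of_mem hxbS
    -- LSEB applied to x
    have hx2 : x ∈ Metric.ball xb η₂ :=
      Metric.mem_ball.mpr (hdistx.trans_le (min_le_right _ _))
    have hfu2 : f x < f xb + (ν₂ : EReal) :=
      hfu.trans_le (add_le_add_right (EReal.coe_le_coe_iff.mpr
        ((min_le_left _ _).trans (min_le_right _ _))) _)
    have hLSa := hLS x hx2 hfl hfu2
    have hinfE : EMetric.infEdist x S = ENNReal.ofReal d := by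
      rw [hddef, Metric.infDist,
        ENNReal.ofReal_toReal (Metric.infEdist_ne_top ⟨xb, hxbS⟩)]; rfl
    have hsub_le : subdist f x ≤ ENNReal.ofReal ‖v‖ := by
      rw [subdist, ← hedist]; exact EMetric.infEdist_le_edist_of_mem hv
    have key : d ^ γ₂ ≤ μ₂ * ‖v‖ := by
      have h3 : EMetric.infEdist x S ^ γ₂ ≤ ENNReal.ofReal μ₂ * ENNReal.ofReal ‖v‖ :=
        hLSa.trans (mul_le_mul_right hsub_le _)
      rw [hinfE, ENNReal.ofReal_rpow_of_nonneg hd0 hγ.le,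
        ← ENNReal.ofReal_mul hμ.le] at h3
      exact (ENNReal.ofReal_le_ofReal_iff (by positivity)).mp h3
    have hdD : d ≤ (μ₂ * ‖v‖) ^ (1 / γ₂) := by
      have h2 : (d ^ γ₂) ^ (1 / γ₂) ≤ (μ₂ * ‖v‖) ^ (1 / γ₂) :=
        Real.rpow_le_rpow (by positivity) key (by positivity)
      rwa [← Real.rpow_mul hd0, mul_one_div, div_self hγ.ne', Real.rpow_one] at h2
    -- prox-regularity applied with y
    have hball_v : v ∈ Metric.ball (0 : EuclideanSpace ℝ (Fin n)) ε := by
      rw [Metric.mem_ball, dist_zero_right]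
      exact hvr.trans_le (min_le_left _ _)
    have hball_x : x ∈ Metric.ball xb ε := by
      rw [Metric.mem_ball]
      have := hdistx.trans_le (min_le_left _ _)
      linarith
    have hfuε : f x < f xb + (ε : EReal) :=
      hfu.trans_le (add_le_add_right (EReal.coe_le_coe_iff.mpr
        ((min_le_left _ _).trans (min_le_left _ _))) _)
    have hball_y : y ∈ Metric.ball xb ε := by
      rw [Metric.mem_ball]
      have h4 : dist y xb ≤ dist y x + dist x xb := dist_triangle y x xb
      have h5 : dist y x = d := by rw [dist_comm]; exact hyd.symm
      have h6 : dist x xb < ε / 2 := hdistx.trans_le (min_le_left _ _)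
      linarith
    have hPR := hprox x v hv hball_v hball_x hfuε y hball_y
    have hyfxb : f y ≤ f xb := hyS
    have hnorm_yx : ‖y - x‖ = d := by
      rw [← dist_eq_norm, dist_comm]; exact hyd.symm
    have hreal : p + ((inner ℝ v (y - x) : ℝ) - ρ / 2 * ‖y - x‖ ^ 2) ≤ q := by
      have h7 := hPR.trans hyfxb
      rw [hp, hq, ← EReal.coe_add] at h7
      exact EReal.coe_le_coe_iff.mp h7
    have hinner : -(inner ℝ v (y - x) : ℝ) ≤ ‖v‖ * d := by
      have h8 : (inner ℝ v (x - y) : ℝ) ≤ ‖v‖ * ‖x - y‖ := real_inner_le_norm v (x - y)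
      have h9 : (inner ℝ v (x - y) : ℝ) = -(inner ℝ v (y - x) : ℝ) := by
        rw [← inner_neg_right, neg_sub]
      have h10 : ‖x - y‖ = d := by rw [← dist_eq_norm]; exact hyd.symm
      rw [h9, h10] at h8
      exact h8
    have hkey2 : a ≤ ‖v‖ * d + ρ / 2 * d ^ 2 := by
      rw [hnorm_yx] at hreal
      simp only [hadef]
      linarith
    by_cases hv0 : ‖v‖ = 0
    · exfalso
      have hD0 : (μ₂ * ‖v‖) ^ (1 / γ₂) = 0 := by
        rw [hv0, mul_zero, Real.zero_rpow (by positivity)]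
      have hd0' : d = 0 := le_antisymm (le_of_le_of_eq hdD hD0) hd0
      rw [hv0, hd0'] at hkey2
      simp at hkey2
      linarith
    have hvpos : 0 < ‖v‖ := (norm_nonneg v).lt_of_ne (Ne.symm hv0)
    have hv1 : ‖v‖ ≤ 1 := le_of_lt (hvr.trans_le (min_le_right _ _))
    -- exponent comparisons
    have e1 : 1 / γ₁ ≤ 1 + 1 / γ₂ := by
      have h11 : (0:ℝ) < γ₂ / (1 + γ₂) := by positivity
      have h12 : 1 / γ₁ ≤ 1 / (γ₂ / (1 + γ₂)) :=
        one_div_le_one_div_of_le h11 (le_max_left _ _)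
      rwa [one_div_div, add_div, div_self hγ.ne', add_comm] at h12
    have e2 : 1 / γ₁ ≤ 2 / γ₂ := by
      have h13 : (0:ℝ) < γ₂ / 2 := by positivity
      have h14 : 1 / γ₁ ≤ 1 / (γ₂ / 2) :=
        one_div_le_one_div_of_le h13 (le_max_right _ _)
      rwa [one_div_div] at h14
    have m1 : ‖v‖ ^ (1 + 1 / γ₂) ≤ ‖v‖ ^ (1 / γ₁) :=
      Real.rpow_le_rpow_of_exponent_ge hvpos hv1 e1
    have m2 : ‖v‖ ^ (2 / γ₂) ≤ ‖v‖ ^ (1 / γ₁) :=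
      Real.rpow_le_rpow_of_exponent_ge hvpos hv1 e2
    have hDnn : (0:ℝ) ≤ (μ₂ * ‖v‖) ^ (1 / γ₂) := by positivity
    have step : a ≤ C * ‖v‖ ^ (1 / γ₁) := by
      have s1 : a ≤ ‖v‖ * (μ₂ * ‖v‖) ^ (1 / γ₂) + ρ / 2 * ((μ₂ * ‖v‖) ^ (1 / γ₂)) ^ 2 := by
        have hsq : d ^ 2 ≤ ((μ₂ * ‖v‖) ^ (1 / γ₂)) ^ 2 := pow_le_pow_left₀ hd0 hdD 2
        have hmd : ‖v‖ * d ≤ ‖v‖ * (μ₂ * ‖v‖) ^ (1 / γ₂) :=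
          mul_le_mul_of_nonneg_left hdD hvpos.le
        have hρ2 : (0:ℝ) ≤ ρ / 2 := by linarith
        have hsq2 := mul_le_mul_of_nonneg_left hsq hρ2
        linarith
      have s2 : ‖v‖ * (μ₂ * ‖v‖) ^ (1 / γ₂) = μ₂ ^ (1 / γ₂) * ‖v‖ ^ (1 + 1 / γ₂) := by
        rw [Real.mul_rpow hμ.le (norm_nonneg v), Real.rpow_add hvpos, Real.rpow_one]
        ring
      have s3 : ((μ₂ * ‖v‖) ^ (1 / γ₂)) ^ 2 = μ₂ ^ (2 / γ₂) * ‖v‖ ^ (2 / γ₂) := by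
        rw [← Real.rpow_natCast ((μ₂ * ‖v‖) ^ (1 / γ₂)) 2,
          ← Real.rpow_mul (by positivity)]
        norm_num
        rw [Real.mul_rpow hμ.le (norm_nonneg v)]
        norm_num [div_eq_mul_inv, mul_comm]
      rw [s2, s3] at s1
      have s4 : μ₂ ^ (1 / γ₂) * ‖v‖ ^ (1 + 1 / γ₂) + ρ / 2 * (μ₂ ^ (2 / γ₂) * ‖v‖ ^ (2 / γ₂))
          ≤ μ₂ ^ (1 / γ₂) * ‖v‖ ^ (1 / γ₁) + ρ / 2 * (μ₂ ^ (2 / γ₂) * ‖v‖ ^ (1 / γ₁)) := by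
        have t1 : (0:ℝ) ≤ μ₂ ^ (1 / γ₂) := (Real.rpow_pos_of_pos hμ _).le
        have t2 : (0:ℝ) ≤ μ₂ ^ (2 / γ₂) := (Real.rpow_pos_of_pos hμ _).le
        have hρ2 : (0:ℝ) ≤ ρ / 2 := by linarith
        have u1 := mul_le_mul_of_nonneg_left m1 t1
        have u2 := mul_le_mul_of_nonneg_left m2 t2
        have u3 := mul_le_mul_of_nonneg_left u2 hρ2
        linarith
      calc a ≤ _ := s1
        _ ≤ _ := s4
        _ = C * ‖v‖ ^ (1 / γ₁) := by rw [hCdef]; ring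
    calc a ^ γ₁ ≤ (C * ‖v‖ ^ (1 / γ₁)) ^ γ₁ := Real.rpow_le_rpow ha.le step hγ₁.le
      _ = C ^ γ₁ * (‖v‖ ^ (1 / γ₁)) ^ γ₁ := Real.mul_rpow hC.le (by positivity)
      _ = C ^ γ₁ * ‖v‖ := by
          rw [← Real.rpow_mul (norm_nonneg v), one_div_mul_cancel hγ₁.ne', Real.rpow_one]


end
end
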